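/- Let M ∈ ℝ^{n×n} be skew-symmetric and A = I − M, and consider GMRES(1) residuals r_{k+1} = (I − α(r_k)A)r_k with α(v) = ⟨v,Av⟩/⟨Av,Av⟩. Then ‖r_k‖ ≤ (m*/√(1 + (m*)²))^k ‖r_0‖ for all k, where m* is the spectral radius of M; in particular GMRES(1) converges for every initial residual since m*/√(1 + (m*)²) < 1. -/

import Mathlib

open Matrix Filter

lemma skew_dot {n : ℕ} {M : Matrix (Fin n) (Fin n) ℝ} (hM : Mᵀ = -M) (v : Fin n → ℝ) :
    v ⬝ᵥ M *ᵥ v = 0 := by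
  have h1 : v ⬝ᵥ M *ᵥ v = (Mᵀ *ᵥ v) ⬝ᵥ v := by
    rw [Matrix.dotProduct_mulVec, Matrix.mulVec_transpose]
  rw [hM, Matrix.neg_mulVec, neg_dotProduct] at h1
  rw [dotProduct_comm] at h1 ⊢
  linarith

lemma mulVec_ofReal {n : ℕ} (M : Matrix (Fin n) (Fin n) ℝ) (u : Fin n → ℝ) :
    (M.map Complex.ofReal) *ᵥ (fun i => ((u i : ℝ) : ℂ)) = fun i => (((M *ᵥ u) i : ℝ) : ℂ) := by
  funext i
  simp only [Matrix.mulVec, dotProduct, Matrix.map_apply]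
  push_cast
  rfl

lemma quad_id {n : ℕ} (M : Matrix (Fin n) (Fin n) ℝ) (u : Fin n → ℝ) :
    u ⬝ᵥ (Mᴴ * M) *ᵥ u = (M *ᵥ u) ⬝ᵥ (M *ᵥ u) := by
  rw [Matrix.conjTranspose_eq_transpose_of_trivial, ← Matrix.mulVec_mulVec,
    Matrix.dotProduct_mulVec, Matrix.vecMul_transpose]

lemma dps_nonneg {n : ℕ} (v : Fin n → ℝ) : 0 ≤ v ⬝ᵥ v :=
  Finset.sum_nonneg fun i _ => mul_self_nonneg _

lemma eig_bound {n : ℕ} (M : Matrix (Fin n) (Fin n) ℝ) (hM : Mᵀ = -M) (mstar : ℝ)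
    (hstar_bound : ∀ μ : ℂ,
      Module.End.HasEigenvalue (Matrix.toLin' (M.map (Complex.ofReal))) μ →
        ‖μ‖ ≤ mstar)
    (j : Fin n) :
    (Matrix.isHermitian_conjTranspose_mul_self M).eigenvalues j ≤ mstar ^ 2 := by
  set hN := Matrix.isHermitian_conjTranspose_mul_self M with hNdef
  set l := hN.eigenvalues j with hl
  set w : Fin n → ℝ := ⇑(hN.eigenvectorBasis j) with hwdef
  have hw : (Mᴴ * M) *ᵥ w = l • w := hN.mulVec_eigenvectorBasis j
  have hw0 : w ≠ 0 := by
    have h1 : hN.eigenvectorBasis j ≠ 0 := hN.eigenvectorBasis.orthonormal.ne_zero j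
    exact fun h => h1 (by ext i; simpa [hwdef] using congrFun h i)
  have hww : 0 < w ⬝ᵥ w := by
    rcases lt_or_eq_of_le (dps_nonneg w) with h | h
    · exact h
    · exact absurd (dotProduct_self_eq_zero.mp h.symm) hw0
  have hl0 : 0 ≤ l := by
    have h1 : w ⬝ᵥ (Mᴴ * M) *ᵥ w = l * (w ⬝ᵥ w) := by
      rw [hw, dotProduct_smul, smul_eq_mul]
    rw [quad_id] at h1
    nlinarith [dps_nonneg (M *ᵥ w)]
  have hMMw : M *ᵥ (M *ᵥ w) = (-l) • w := by
    have h2 : Mᴴ = -M := by rw [Matrix.conjTranspose_eq_transpose_of_trivial, hM]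
    rw [h2, Matrix.neg_mul, Matrix.neg_mulVec, ← Matrix.mulVec_mulVec] at hw
    have h3 := neg_eq_iff_eq_neg.mp hw
    rw [h3, ← neg_smul]
  -- complexify
  set Mc := M.map Complex.ofReal with hMc
  set wc : Fin n → ℂ := fun i => ((w i : ℝ) : ℂ) with hwc
  have hwc0 : wc ≠ 0 := by
    obtain ⟨i, hi⟩ := Function.ne_iff.mp hw0
    refine Function.ne_iff.mpr ⟨i, ?_⟩
    exact Complex.ofReal_ne_zero.mpr hi
  have hMcwc : Mc *ᵥ wc = fun i => (((M *ᵥ w) i : ℝ) : ℂ) := mulVec_ofReal M w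
  have hMMwc : Mc *ᵥ (Mc *ᵥ wc) = (-(l:ℂ)) • wc := by
    rw [hMcwc, mulVec_ofReal, hMMw]
    funext i
    simp [Pi.smul_apply, smul_eq_mul, hwc]
  set s := Real.sqrt l with hs
  set μ : ℂ := Complex.I * (s : ℂ) with hmu
  have hμ2 : μ * μ = -(l : ℂ) := by
    have h1 : ((s : ℂ)) * (s : ℂ) = (l : ℂ) := by
      rw [← Complex.ofReal_mul, Real.mul_self_sqrt hl0]
    calc μ * μ = Complex.I * Complex.I * ((s:ℂ) * (s:ℂ)) := by ring
    _ = -(l:ℂ) := by rw [Complex.I_mul_I, h1]; ring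
  have habs : ‖μ‖ = s := by
    simp [hmu, hs, Complex.norm_real, abs_of_nonneg (Real.sqrt_nonneg l)]
  have key : ∃ μ' : ℂ, Module.End.HasEigenvalue (Matrix.toLin' Mc) μ' ∧ ‖μ'‖ = s := by
    by_cases hu : Mc *ᵥ wc + μ • wc = 0
    · refine ⟨-μ, ?_, by simpa using habs⟩
      apply Module.End.hasEigenvalue_of_hasEigenvector (x := wc)
      refine ⟨Module.End.mem_eigenspace_iff.mpr ?_, hwc0⟩
      rw [Matrix.toLin'_apply]
      have := eq_neg_of_add_eq_zero_left hu
      rw [this]; ext i; simp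
    · refine ⟨μ, ?_, habs⟩
      apply Module.End.hasEigenvalue_of_hasEigenvector (x := Mc *ᵥ wc + μ • wc)
      refine ⟨Module.End.mem_eigenspace_iff.mpr ?_, hu⟩
      rw [Matrix.toLin'_apply, Matrix.mulVec_add, Matrix.mulVec_smul, hMMwc, ← hμ2]
      ext i
      simp [Pi.smul_apply, smul_eq_mul]
      ring
  obtain ⟨μ', hev, habs'⟩ := key
  have hsle : s ≤ mstar := habs' ▸ hstar_bound μ' hev
  calc l = s ^ 2 := by rw [hs, Real.sq_sqrt hl0]
  _ ≤ mstar ^ 2 := by nlinarith [Real.sqrt_nonneg l]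

lemma quad_bound {n : ℕ} (M : Matrix (Fin n) (Fin n) ℝ) (hM : Mᵀ = -M) (mstar : ℝ)
    (hstar_bound : ∀ μ : ℂ,
      Module.End.HasEigenvalue (Matrix.toLin' (M.map (Complex.ofReal))) μ →
        ‖μ‖ ≤ mstar)
    (v : Fin n → ℝ) :
    (M *ᵥ v) ⬝ᵥ (M *ᵥ v) ≤ mstar ^ 2 * (v ⬝ᵥ v) := by
  set hN := Matrix.isHermitian_conjTranspose_mul_self M with hNdef
  set b := hN.eigenvectorBasis with hb
  set x : EuclideanSpace ℝ (Fin n) := (WithLp.equiv 2 (Fin n → ℝ)).symm v with hx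
  have hinner : ∀ y z : EuclideanSpace ℝ (Fin n),
      (inner ℝ y z : ℝ) = (WithLp.equiv 2 (Fin n → ℝ) y) ⬝ᵥ (WithLp.equiv 2 (Fin n → ℝ) z) := by
    intro y z
    simp [PiLp.inner_apply, RCLike.inner_apply, dotProduct, mul_comm]
  have hsym : (Matrix.toEuclideanLin (Mᴴ * M)).IsSymmetric :=
    Matrix.isHermitian_iff_isSymmetric.mp hN
  have happ : ∀ i : Fin n, Matrix.toEuclideanLin (Mᴴ * M) (b i) = hN.eigenvalues i • b i := by
    intro i
    apply (WithLp.equiv 2 (Fin n → ℝ)).injective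
    rw [WithLp.equiv_apply, Matrix.ofLp_toEuclideanLin_apply]
    exact hN.mulVec_eigenvectorBasis i
  set T := Matrix.toEuclideanLin (Mᴴ * M) with hT
  have hexp : (inner ℝ x (T x) : ℝ) = ∑ i, hN.eigenvalues i * ((inner ℝ (b i) x : ℝ))^2 := by
    rw [← b.sum_inner_mul_inner x (T x)]
    congr 1
    funext i
    have h1 : (inner ℝ (b i) (T x) : ℝ) = inner ℝ (T (b i)) x := (hsym (b i) x).symm
    rw [h1, happ i, real_inner_smul_left, real_inner_comm x (b i)]
    ring
  have hbound : (inner ℝ x (T x) : ℝ) ≤ mstar ^ 2 * (inner ℝ x x : ℝ) := by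
    rw [hexp, ← b.sum_inner_mul_inner x x, Finset.mul_sum]
    apply Finset.sum_le_sum
    intro i _
    have h1 : (inner ℝ x (b i) : ℝ) * (inner ℝ (b i) x : ℝ) = ((inner ℝ (b i) x : ℝ))^2 := by
      rw [real_inner_comm x (b i)]; ring
    rw [h1]
    exact mul_le_mul_of_nonneg_right (eig_bound M hM mstar hstar_bound i) (sq_nonneg _)
  have hTx : T x = (WithLp.equiv 2 (Fin n → ℝ)).symm ((Mᴴ * M) *ᵥ v) :=
    Matrix.toEuclideanLin_apply_piLp_toLp _ _
  rw [hinner, hinner, hTx] at hbound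
  simp only [hx, Equiv.apply_symm_apply] at hbound
  rw [quad_id M v] at hbound
  exact hbound

lemma step_bound {n : ℕ} (M A : Matrix (Fin n) (Fin n) ℝ) (hM : Mᵀ = -M) (hA : A = 1 - M)
    (mstar : ℝ) (hq : ∀ u : Fin n → ℝ, (M *ᵥ u) ⬝ᵥ (M *ᵥ u) ≤ mstar ^ 2 * (u ⬝ᵥ u))
    (v : Fin n → ℝ) (hv : v ≠ 0) :
    (v - (v ⬝ᵥ A *ᵥ v / (A *ᵥ v ⬝ᵥ A *ᵥ v)) • A *ᵥ v) ⬝ᵥ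
      (v - (v ⬝ᵥ A *ᵥ v / (A *ᵥ v ⬝ᵥ A *ᵥ v)) • A *ᵥ v)
      ≤ mstar ^ 2 / (1 + mstar ^ 2) * (v ⬝ᵥ v) := by
  set a := v ⬝ᵥ v with ha'
  set bb := (M *ᵥ v) ⬝ᵥ (M *ᵥ v) with hb'
  have ha : 0 < a := by
    rcases lt_or_eq_of_le (dps_nonneg v) with h | h
    · exact h
    · exact absurd (dotProduct_self_eq_zero.mp h.symm) hv
  have hb : 0 ≤ bb := dps_nonneg _
  have hAv : A *ᵥ v = v - M *ᵥ v := by rw [hA, Matrix.sub_mulVec, Matrix.one_mulVec]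
  have hMv0 : v ⬝ᵥ M *ᵥ v = 0 := skew_dot hM v
  have hMv0' : (M *ᵥ v) ⬝ᵥ v = 0 := by rw [dotProduct_comm]; exact hMv0
  have h1 : v ⬝ᵥ A *ᵥ v = a := by
    rw [hAv, dotProduct_sub, hMv0, sub_zero]
  have h2 : (A *ᵥ v) ⬝ᵥ (A *ᵥ v) = a + bb := by
    rw [hAv, sub_dotProduct, dotProduct_sub, dotProduct_sub,
      hMv0, hMv0']
    ring
  have h3 : (A *ᵥ v) ⬝ᵥ v = a := by
    rw [hAv, sub_dotProduct, hMv0', sub_zero]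
  have hab : 0 < a + bb := by linarith
  have hlhs : (v - (v ⬝ᵥ A *ᵥ v / (A *ᵥ v ⬝ᵥ A *ᵥ v)) • A *ᵥ v) ⬝ᵥ
      (v - (v ⬝ᵥ A *ᵥ v / (A *ᵥ v ⬝ᵥ A *ᵥ v)) • A *ᵥ v) = a - a ^ 2 / (a + bb) := by
    rw [sub_dotProduct, dotProduct_sub, dotProduct_sub,
      smul_dotProduct, dotProduct_smul, smul_dotProduct,
      dotProduct_smul, h1, h2, h3, smul_eq_mul, smul_eq_mul, smul_eq_mul]
    field_simp
    ring
  rw [hlhs]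
  have heq : a - a ^ 2 / (a + bb) = a * bb / (a + bb) := by
    field_simp
    ring
  rw [heq, div_mul_eq_mul_div, div_le_div_iff₀ hab (by positivity)]
  nlinarith [hq v, mul_le_mul_of_nonneg_left (hq v) ha.le, sq_nonneg mstar]

theorem stmt16 {n : ℕ} (M : Matrix (Fin n) (Fin n) ℝ) (hM : Mᵀ = -M)
    (A : Matrix (Fin n) (Fin n) ℝ) (hA : A = 1 - M)
    (mstar : ℝ)
    (hstar_bound : ∀ μ : ℂ,
      Module.End.HasEigenvalue (Matrix.toLin' (M.map (Complex.ofReal))) μ →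
        ‖μ‖ ≤ mstar)
    (hstar_mem : ∃ μ : ℂ,
      Module.End.HasEigenvalue (Matrix.toLin' (M.map (Complex.ofReal))) μ ∧
        ‖μ‖ = mstar)
    (r : ℕ → Fin n → ℝ)
    (hrec : ∀ k, r (k + 1) = if r k = 0 then 0 else
      r k - (r k ⬝ᵥ A.mulVec (r k) / (A.mulVec (r k) ⬝ᵥ A.mulVec (r k))) • A.mulVec (r k)) :
    (∀ k, Real.sqrt (r k ⬝ᵥ r k)
        ≤ (mstar / Real.sqrt (1 + mstar ^ 2)) ^ k * Real.sqrt (r 0 ⬝ᵥ r 0)) ∧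
    mstar / Real.sqrt (1 + mstar ^ 2) < 1 ∧
    Tendsto r atTop (nhds 0) := by
  obtain ⟨μ₀, -, hμ₀⟩ := hstar_mem
  have hm0 : 0 ≤ mstar := hμ₀ ▸ norm_nonneg μ₀
  set c := mstar / Real.sqrt (1 + mstar ^ 2) with hc
  have hden : 0 < Real.sqrt (1 + mstar ^ 2) := Real.sqrt_pos.mpr (by positivity)
  have hc0 : 0 ≤ c := div_nonneg hm0 hden.le
  have hc1 : c < 1 := by
    rw [hc, div_lt_one hden]
    calc mstar = Real.sqrt (mstar ^ 2) := (Real.sqrt_sq hm0).symm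
    _ < Real.sqrt (1 + mstar ^ 2) := Real.sqrt_lt_sqrt (sq_nonneg _) (by linarith)
  have hcsq : c ^ 2 = mstar ^ 2 / (1 + mstar ^ 2) := by
    rw [hc, div_pow, Real.sq_sqrt (by positivity)]
  have hq : ∀ u : Fin n → ℝ, (M *ᵥ u) ⬝ᵥ (M *ᵥ u) ≤ mstar ^ 2 * (u ⬝ᵥ u) :=
    quad_bound M hM mstar hstar_bound
  have hmain : ∀ k, Real.sqrt (r k ⬝ᵥ r k) ≤ c ^ k * Real.sqrt (r 0 ⬝ᵥ r 0) := by
    intro k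
    induction k with
    | zero => simp
    | succ k ih =>
      by_cases h : r k = 0
      · rw [hrec k, if_pos h]
        have : (0 : Fin n → ℝ) ⬝ᵥ (0 : Fin n → ℝ) = 0 := zero_dotProduct 0
        rw [this, Real.sqrt_zero]
        positivity
      · have hstep : Real.sqrt (r (k+1) ⬝ᵥ r (k+1)) ≤ c * Real.sqrt (r k ⬝ᵥ r k) := by
          have hbd := step_bound M A hM hA mstar hq (r k) h
          rw [← hcsq] at hbd
          rw [hrec k, if_neg h]
          calc Real.sqrt _ ≤ Real.sqrt (c ^ 2 * (r k ⬝ᵥ r k)) := Real.sqrt_le_sqrt hbd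
          _ = c * Real.sqrt (r k ⬝ᵥ r k) := by
            rw [Real.sqrt_mul (sq_nonneg c), Real.sqrt_sq hc0]
        calc Real.sqrt (r (k+1) ⬝ᵥ r (k+1)) ≤ c * Real.sqrt (r k ⬝ᵥ r k) := hstep
        _ ≤ c * (c ^ k * Real.sqrt (r 0 ⬝ᵥ r 0)) := mul_le_mul_of_nonneg_left ih hc0
        _ = c ^ (k+1) * Real.sqrt (r 0 ⬝ᵥ r 0) := by ring
  refine ⟨hmain, hc1, ?_⟩
  have hgeo : Tendsto (fun k => c ^ k * Real.sqrt (r 0 ⬝ᵥ r 0)) atTop (nhds 0) := by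
    have := (tendsto_pow_atTop_nhds_zero_of_lt_one hc0 hc1).mul_const (Real.sqrt (r 0 ⬝ᵥ r 0))
    simpa using this
  have hnorm : Tendsto (fun k => Real.sqrt (r k ⬝ᵥ r k)) atTop (nhds 0) :=
    squeeze_zero (fun k => Real.sqrt_nonneg _) hmain hgeo
  rw [tendsto_pi_nhds]
  intro i
  have hcoord : ∀ k, ‖r k i‖ ≤ Real.sqrt (r k ⬝ᵥ r k) := by
    intro k
    have h1 : (r k i) ^ 2 ≤ r k ⬝ᵥ r k := by
      have := Finset.single_le_sum (f := fun j => r k j * r k j)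
        (fun j _ => mul_self_nonneg _) (Finset.mem_univ i)
      simpa [dotProduct, pow_two] using this
    calc ‖r k i‖ = Real.sqrt ((r k i) ^ 2) := by rw [Real.sqrt_sq_eq_abs, Real.norm_eq_abs]
    _ ≤ Real.sqrt (r k ⬝ᵥ r k) := Real.sqrt_le_sqrt h1
  have := squeeze_zero_norm hcoord hnorm
  simpa using this
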